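/- Suppose ⟨p_ξ : ξ < λ⟩ is a ≤_{Q¹_S}-increasing sequence such that: (a) w^{p_ξ} = w^{p_0} for all ξ; (b) at limit γ, p_γ is the natural limit of ⟨p_ξ : ξ < γ⟩; (c) for each ξ, if δ ∈ C^{p_ξ} with otp(C^{p_ξ} ∩ δ) = ξ, then C^{p_{ξ+1}} ∩ (δ+1) = C^{p_ξ} ∩ (δ+1) and c^{p_{ξ+1}}_α = c^{p_ξ}_α for all α ∈ C^{p_{ξ+1}} ∩ δ. Then the sequence has an upper bound in Q¹_S. -/

import Mathlib

open Set

noncomputable section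

universe u

/-- `c` is an `(α,β)`-extending function: it maps subsets of `α` (coded as subsets of
`Set.Iio α`) to subsets of `β` that are not subsets of `α`, with `c u ∩ α = u`. -/
def ExtFun (α β : Ordinal.{u}) (c : Set Ordinal.{u} → Set Ordinal.{u}) : Prop :=
  ∀ u, u ⊆ Set.Iio α → c u ⊆ Set.Iio β ∧ ¬ c u ⊆ Set.Iio α ∧ c u ∩ Set.Iio α = u

/-- The next element of `C` above `α`. -/
def nextC (C : Set Ordinal.{u}) (α : Ordinal.{u}) : Ordinal.{u} := sInf (C ∩ Set.Ioi α)

/-- The least element of `C` above all elements of `w`. -/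
def firstAbove (C : Set Ordinal.{u}) (w : Set Ordinal.{u}) : Ordinal.{u} :=
  sInf {α ∈ C | w ⊆ Set.Iio α}

/-- The least element of `C` which is `≥ sup w`. -/
def minAboveSup (C : Set Ordinal.{u}) (w : Set Ordinal.{u}) : Ordinal.{u} :=
  sInf (C \ Set.Iio (sSup w))

/-- `C` is an unbounded subset of (the ordinals below) `lam`. -/
def UnbIn (lam : Ordinal.{u}) (C : Set Ordinal.{u}) : Prop :=
  C ⊆ Set.Iio lam ∧ ∀ α < lam, ∃ β ∈ C, α < β

/-- `C` is a club (closed and unbounded) subset of `lam`. -/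
def IsClubIn (lam : Ordinal.{u}) (C : Set Ordinal.{u}) : Prop :=
  UnbIn lam C ∧
    ∀ ξ < lam, (C ∩ Set.Iio ξ).Nonempty → ξ = sSup (C ∩ Set.Iio ξ) → ξ ∈ C

/-- `S` is a stationary subset of `lam`. -/
def StatIn (lam : Ordinal.{u}) (S : Set Ordinal.{u}) : Prop :=
  S ⊆ Set.Iio lam ∧ ∀ C, IsClubIn lam C → (S ∩ C).Nonempty

/-- `𝔠 = ⟨c α : α ∈ C⟩` is a `C`-extending sequence. -/
def CextSeq (lam : Ordinal.{u}) (C : Set Ordinal.{u})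
    (c : Ordinal.{u} → Set Ordinal.{u} → Set Ordinal.{u}) : Prop :=
  UnbIn lam C ∧ ∀ α ∈ C, ExtFun α (nextC C α) (c α)

/-- `pos⁺(w, 𝔠, β)`. -/
def posPlus (C : Set Ordinal.{u}) (c : Ordinal.{u} → Set Ordinal.{u} → Set Ordinal.{u})
    (w : Set Ordinal.{u}) (β : Ordinal.{u}) : Set (Set Ordinal.{u}) :=
  {u | u ⊆ Set.Iio β ∧
    u ∩ Set.Iio (firstAbove C w) = w ∧
    (∀ α₀ ∈ C, w ⊆ Set.Iio α₀ → (C ∩ Set.Ioi α₀).Nonempty → nextC C α₀ ≤ β →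
      (c α₀ (u ∩ Set.Iio α₀) = u ∩ Set.Iio (nextC C α₀) ∨
        u ∩ Set.Iio α₀ = u ∩ Set.Iio (nextC C α₀))) ∧
    (∀ α₀, sSup w < α₀ → α₀ ∉ C → (C ∩ Set.Iio α₀).Nonempty →
      α₀ = sSup (C ∩ Set.Iio α₀) → (C ∩ Set.Ioi α₀).Nonempty → nextC C α₀ ≤ β →
      u ∩ Set.Iio (nextC C α₀) = u ∩ Set.Iio α₀)}

/-- `pos(w, 𝔠, β)`. -/
def pos (C : Set Ordinal.{u}) (c : Ordinal.{u} → Set Ordinal.{u} → Set Ordinal.{u})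
    (w : Set Ordinal.{u}) (β : Ordinal.{u}) : Set (Set Ordinal.{u}) :=
  {u ∈ posPlus C c w β |
    firstAbove C w ≤ β → nextC C (firstAbove C w) ≤ β →
      u ∩ Set.Iio (nextC C (firstAbove C w)) = c (firstAbove C w) w}

/-- `w` is an `S`-closed set: limits of `w` lying in `S` belong to `w`. -/
def SClosed (S w : Set Ordinal.{u}) : Prop :=
  ∀ ξ, (w ∩ Set.Iio ξ).Nonempty → ξ = sSup (w ∩ Set.Iio ξ) → ξ ∈ S → ξ ∈ w

/-- `𝔠` is an `S`-closed `C`-extending sequence. -/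
def SClosedSeq (lam : Ordinal.{u}) (S C : Set Ordinal.{u})
    (c : Ordinal.{u} → Set Ordinal.{u} → Set Ordinal.{u}) : Prop :=
  IsClubIn lam C ∧ CextSeq lam C c ∧
  (∀ α ∈ C, ∀ u, u ⊆ Set.Iio α → α ∈ c α u) ∧
  (∀ ξ ∈ S, ξ ∉ C → ∀ α ∈ C ∩ Set.Iio ξ, ∀ u, u ⊆ Set.Iio α →
    ξ = sSup (c α u ∩ Set.Iio ξ) → ξ ∈ c α u)

/-- `pos⁺_S(w, 𝔠, β)`. -/
def posPlusS (S C : Set Ordinal.{u}) (c : Ordinal.{u} → Set Ordinal.{u} → Set Ordinal.{u})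
    (w : Set Ordinal.{u}) (β : Ordinal.{u}) : Set (Set Ordinal.{u}) :=
  {u ∈ posPlus C c w β | SClosed S (u ∪ {β})}

/-- `pos_S(w, 𝔠, β)`. -/
def posS (S C : Set Ordinal.{u}) (c : Ordinal.{u} → Set Ordinal.{u} → Set Ordinal.{u})
    (w : Set Ordinal.{u}) (β : Ordinal.{u}) : Set (Set Ordinal.{u}) :=
  {u ∈ pos C c w β | SClosed S (u ∪ {β})}

/-- A condition in the forcing notion `Q¹_S`: a triple `(w, C, 𝔠)` where `C` is a club of
`lam`, `w ⊆ min C` with `w ∪ {min C}` `S`-closed, and `𝔠` is an `S`-closed `C`-extending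
sequence (normalized to be `∅` outside its natural domain). -/
structure Q1S (lam : Ordinal.{u}) (S : Set Ordinal.{u}) where
  w : Set Ordinal.{u}
  C : Set Ordinal.{u}
  c : Ordinal.{u} → Set Ordinal.{u} → Set Ordinal.{u}
  seq : SClosedSeq lam S C c
  w_sub : w ⊆ Set.Iio (sInf C)
  w_cl : SClosed S (w ∪ {sInf C})
  norm : ∀ α u, (α ∉ C ∨ ¬ u ⊆ Set.Iio α) → c α u = ∅

/-- The order of `Q¹_S`. -/
def Q1Sle (lam : Ordinal.{u}) (S : Set Ordinal.{u}) (p q : Q1S lam S) : Prop :=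
  q.C ⊆ p.C ∧ q.w ∈ posPlusS S p.C p.c p.w (sInf q.C) ∧
  ∀ α₀ ∈ q.C, (q.C ∩ Set.Ioi α₀).Nonempty →
    ∀ u ∈ posPlusS S q.C q.c q.w α₀,
      q.c α₀ u ∈ posS S p.C p.c u (nextC q.C α₀)

open scoped Classical in
/-- Restriction of an extending sequence to a smaller domain `C` (normalized). -/
def restC (C : Set Ordinal.{u}) (c : Ordinal.{u} → Set Ordinal.{u} → Set Ordinal.{u}) :
    Ordinal.{u} → Set Ordinal.{u} → Set Ordinal.{u} :=
  fun α u => if α ∈ C ∧ u ⊆ Set.Iio α then c α u else ∅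

/-- `q` is the condition `p↾_α u = (u, C^p \ α, 𝔠^p ↾ (C^p \ α))`. -/
def IsRestrictedCond (lam : Ordinal.{u}) (S : Set Ordinal.{u}) (p : Q1S lam S)
    (α : Ordinal.{u}) (u : Set Ordinal.{u}) (q : Q1S lam S) : Prop :=
  q.w = u ∧ q.C = p.C ∩ Set.Ici α ∧ q.c = restC (p.C ∩ Set.Ici α) p.c

/-- The order type of a set of ordinals. -/
def otp (s : Set Ordinal.{u}) : Ordinal.{u + 1} := Ordinal.type (Subrel ((· < ·) : Ordinal.{u} → Ordinal.{u} → Prop) (· ∈ s))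

open scoped Classical in
/-- The extending sequence of the natural limit of an increasing sequence
`⟨p ξ : ξ < γ⟩` of conditions in `Q¹_S`. -/
def natLimitC (lam : Ordinal.{u}) (S : Set Ordinal.{u}) (γ : Ordinal.{u})
    (p : Ordinal.{u} → Q1S lam S) : Ordinal.{u} → Set Ordinal.{u} → Set Ordinal.{u} :=
  fun δ u =>
    if δ ∈ ⋂ ξ ∈ Set.Iio γ, (p ξ).C then
      if u ⊆ Set.Iio δ then
        if ∀ ξ < γ, u ∈ posPlusS S (p ξ).C (p ξ).c (p ξ).w δ then
          ⋃ ξ ∈ Set.Iio γ, (p ξ).c δ u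
        else u ∪ {δ}
      else ∅
    else ∅

/-- `G` is a filter on the forcing notion `Q¹_S`. -/
def QFilter (lam : Ordinal.{u}) (S : Set Ordinal.{u}) (G : Set (Q1S lam S)) : Prop :=
  G.Nonempty ∧ (∀ p ∈ G, ∀ q, Q1Sle lam S q p → q ∈ G) ∧
    ∀ p ∈ G, ∀ q ∈ G, ∃ r ∈ G, Q1Sle lam S p r ∧ Q1Sle lam S q r

/-- `G` is a generic filter on `Q¹_S`: a filter meeting every dense set. -/
def QGeneric (lam : Ordinal.{u}) (S : Set Ordinal.{u}) (G : Set (Q1S lam S)) : Prop :=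
  QFilter lam S G ∧ ∀ D : Set (Q1S lam S),
    (∀ p, ∃ q ∈ D, Q1Sle lam S p q) → (D ∩ G).Nonempty

section Game
variable {Q : Type*}

/-- `f` codes a legal partial play of `⅁₀^λ(Q, r)` of length `i` in which Complete
follows the strategy `σ`. -/
def IsPartialPlay (le : Q → Q → Prop) (r : Q)
    (σ : (Ordinal.{u} → Q × Q) → Ordinal.{u} → Q → Q) (i : Ordinal.{u})
    (f : Ordinal.{u} → Q × Q) : Prop :=
  ∀ j < i, le r (f j).1 ∧ (∀ k < j, le (f k).2 (f j).1) ∧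
    le (f j).1 (f j).2 ∧ (f j).2 = σ f j (f j).1

/-- `σ` is a winning strategy for Complete in `⅁₀^λ(Q, r)`: it depends only on the
history, Incomplete always has a legal move, and `σ` answers any legal move legally. -/
def WinningStrat (le : Q → Q → Prop) (lam : Ordinal.{u}) (r : Q)
    (σ : (Ordinal.{u} → Q × Q) → Ordinal.{u} → Q → Q) : Prop :=
  (∀ f g i p, (∀ j < i, f j = g j) → σ f i p = σ g i p) ∧
  ∀ i < lam, ∀ f, IsPartialPlay le r σ i f →
    (∃ p, le r p ∧ ∀ j < i, le (f j).2 p) ∧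
    (∀ p, le r p → (∀ j < i, le (f j).2 p) → le p (σ f i p))

/-- `Q` is strategically `(<λ)`-complete. -/
def StratComplete (Q : Type*) (le : Q → Q → Prop) (lam : Ordinal.{u}) : Prop :=
  ∀ r : Q, ∃ σ, WinningStrat le lam r σ

end Game

/-- A family `Fam ⊆ β^β` is `F`-dominating. -/
def Dominating {β : Type*} [LT β] (F : Set (Set β)) (Fam : Set (β → β)) : Prop :=
  ∀ g : β → β, ∃ f ∈ Fam, {a | g a < f a} ∈ F

/-- The `F`-dominating number `𝔡_F`. -/
def domNum {β : Type*} [LT β] (F : Set (Set β)) : Cardinal :=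
  sInf {c | ∃ Fam : Set (β → β), Dominating F Fam ∧ c = Cardinal.mk Fam}

/-- `U` is a (proper) filter on (the ordinals below) `lam`. -/
def FilterOn (lam : Ordinal.{u}) (U : Set (Set Ordinal.{u})) : Prop :=
  (∀ A ∈ U, A ⊆ Set.Iio lam) ∧ Set.Iio lam ∈ U ∧ ∅ ∉ U ∧
  (∀ A ∈ U, ∀ B ∈ U, A ∩ B ∈ U) ∧
  (∀ A ∈ U, ∀ B, A ⊆ B → B ⊆ Set.Iio lam → B ∈ U)

/-- The diagonal intersection of a `lam`-sequence of sets. -/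
def diagInter (lam : Ordinal.{u}) (A : Ordinal.{u} → Set Ordinal.{u}) : Set Ordinal.{u} :=
  {δ | δ < lam ∧ ∀ i < δ, δ ∈ A i}

/-- `U` is a normal filter on `lam`. -/
def NormalFilterOn (lam : Ordinal.{u}) (U : Set (Set Ordinal.{u})) : Prop :=
  FilterOn lam U ∧
    ∀ A : Ordinal.{u} → Set Ordinal.{u}, (∀ i < lam, A i ∈ U) → diagInter lam A ∈ U

/-- A condition in the forcing notion `Q²_𝒰`. -/
structure Q2U (lam : Ordinal.{u}) (U : Set (Set Ordinal.{u})) where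
  w : Set Ordinal.{u}
  C : Set Ordinal.{u}
  c : Ordinal.{u} → Set Ordinal.{u} → Set Ordinal.{u}
  C_mem : C ∈ U
  seq : CextSeq lam C c
  w_sub : w ⊆ Set.Iio (sInf C)
  norm : ∀ α u, (α ∉ C ∨ ¬ u ⊆ Set.Iio α) → c α u = ∅

/-- The order of `Q²_𝒰`. -/
def Q2Ule (lam : Ordinal.{u}) (U : Set (Set Ordinal.{u})) (p q : Q2U lam U) : Prop :=
  q.C ⊆ p.C ∧ q.w ∈ posPlus p.C p.c p.w (sInf q.C) ∧
  ∀ α₀ ∈ q.C, (q.C ∩ Set.Ioi α₀).Nonempty →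
    ∀ u ∈ posPlus q.C q.c q.w α₀,
      q.c α₀ u ∈ pos p.C p.c u (nextC q.C α₀)

/-- `q` is the condition `p↾_α u` in `Q²_𝒰`. -/
def IsRestrictedCond2 (lam : Ordinal.{u}) (U : Set (Set Ordinal.{u})) (p : Q2U lam U)
    (α : Ordinal.{u}) (u : Set Ordinal.{u}) (q : Q2U lam U) : Prop :=
  q.w = u ∧ q.C = p.C ∩ Set.Ici α ∧ q.c = restC (p.C ∩ Set.Ici α) p.c

end


set_option linter.unusedSectionVars false
set_option linter.unusedVariables false

namespace Q1SFusion

open Ordinal Set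

/-- If `v = u ∩ Iio δ'` and `x ≤ δ'`, then `v ∩ Iio x = u ∩ Iio x`. -/
theorem inter_Iio_trans {u : Set Ordinal} {δ' x : Ordinal} (hx : x ≤ δ') :
    (u ∩ Set.Iio δ') ∩ Set.Iio x = u ∩ Set.Iio x := by
  ext y
  simp only [Set.mem_inter_iff, Set.mem_Iio]
  exact ⟨fun h => ⟨h.1.1, h.2⟩, fun h => ⟨⟨h.1, h.2.trans_le hx⟩, h.2⟩⟩

theorem inter_Iio_squeeze {u : Set Ordinal} {a b c d : Ordinal} (hab : a ≤ b) (hbc : b ≤ c)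
    (hcd : c ≤ d) (h : u ∩ Set.Iio a = u ∩ Set.Iio d) : u ∩ Set.Iio b = u ∩ Set.Iio c := by
  have h1 : u ∩ Set.Iio a ⊆ u ∩ Set.Iio b := fun x hx => ⟨hx.1, lt_of_lt_of_le hx.2 hab⟩
  have h2 : u ∩ Set.Iio b ⊆ u ∩ Set.Iio c := fun x hx => ⟨hx.1, lt_of_lt_of_le hx.2 hbc⟩
  have h3 : u ∩ Set.Iio c ⊆ u ∩ Set.Iio d := fun x hx => ⟨hx.1, lt_of_lt_of_le hx.2 hcd⟩
  refine subset_antisymm h2 ?_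
  calc u ∩ Set.Iio c ⊆ u ∩ Set.Iio d := h3
    _ = u ∩ Set.Iio a := h.symm
    _ ⊆ u ∩ Set.Iio b := h1

theorem firstAbove_eq {C w : Set Ordinal} (hC : C.Nonempty) (hw : w ⊆ Set.Iio (sInf C)) :
    firstAbove C w = sInf C := by
  unfold firstAbove
  refine le_antisymm (csInf_le' ⟨csInf_mem hC, hw⟩) (le_csInf ⟨_, csInf_mem hC, hw⟩ ?_)
  rintro b ⟨hb, -⟩
  exact csInf_le' hb

theorem nextC_mem {C : Set Ordinal} {α : Ordinal} (h : (C ∩ Set.Ioi α).Nonempty) :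
    nextC C α ∈ C ∧ α < nextC C α :=
  csInf_mem h

theorem nextC_le {C : Set Ordinal} {α β : Ordinal} (hβ : β ∈ C) (hαβ : α < β) :
    nextC C α ≤ β :=
  csInf_le' ⟨hβ, hαβ⟩

theorem nextC_mono {C C' : Set Ordinal} {α : Ordinal} (h : C' ⊆ C)
    (hne : (C' ∩ Set.Ioi α).Nonempty) : nextC C α ≤ nextC C' α := by
  have hm := csInf_mem hne
  exact nextC_le (h hm.1) hm.2

/-- Fusion hypotheses bundled. -/
structure Hyp (κ : Cardinal.{0}) (S : Set Ordinal) (p : Ordinal → Q1S κ.ord S) : Prop where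
  hκ : κ.IsInaccessible
  hmono : ∀ ξ ζ, ξ < ζ → ζ < κ.ord → Q1Sle κ.ord S (p ξ) (p ζ)
  ha : ∀ ξ < κ.ord, (p ξ).w = (p 0).w
  hb : ∀ γ < κ.ord, Order.IsSuccLimit γ →
      (p γ).w = (⋃ ξ ∈ Set.Iio γ, (p ξ).w) ∧
      (p γ).C = (⋂ ξ ∈ Set.Iio γ, (p ξ).C) ∧
      (p γ).c = natLimitC κ.ord S γ p
  hc : ∀ ξ < κ.ord, ∀ δ ∈ (p ξ).C,
      otp ((p ξ).C ∩ Set.Iio δ) = Ordinal.lift.{1} ξ →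
      (p (ξ + 1)).C ∩ Set.Iic δ = (p ξ).C ∩ Set.Iic δ ∧
      ∀ α ∈ (p (ξ + 1)).C ∩ Set.Iio δ, (p (ξ + 1)).c α = (p ξ).c α

variable {κ : Cardinal.{0}} {S : Set Ordinal} {p : Ordinal → Q1S κ.ord S}

/-- The intersection of all the clubs. -/
def DD (p : Ordinal → Q1S κ.ord S) : Set Ordinal := ⋂ ξ ∈ Set.Iio κ.ord, (p ξ).C

theorem mem_DD {δ : Ordinal} : δ ∈ DD p ↔ ∀ ξ < κ.ord, δ ∈ (p ξ).C := by
  simp [DD]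

namespace Hyp

variable (H : Hyp κ S p)
include H

theorem lam_limit : Order.IsSuccLimit κ.ord := Cardinal.isSuccLimit_ord H.hκ.1.le

theorem lam_pos : 0 < κ.ord := H.lam_limit.pos

theorem succ_lt {ξ : Ordinal} (hξ : ξ < κ.ord) : ξ + 1 < κ.ord := by
  rw [Ordinal.add_one_eq_succ]
  exact H.lam_limit.succ_lt hξ

theorem cof_eq : (κ.ord).cof = κ := H.hκ.isRegular.cof_eq

theorem C_sub {ξ : Ordinal} (hξ : ξ < κ.ord) : (p ξ).C ⊆ Set.Iio κ.ord :=
  (p ξ).seq.1.1.1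

theorem C_unb {ξ : Ordinal} (hξ : ξ < κ.ord) : ∀ α < κ.ord, ∃ β ∈ (p ξ).C, α < β :=
  (p ξ).seq.1.1.2

theorem C_Ioi_ne {ξ α : Ordinal} (hξ : ξ < κ.ord) (hα : α < κ.ord) :
    ((p ξ).C ∩ Set.Ioi α).Nonempty := by
  obtain ⟨β, hβ, hαβ⟩ := H.C_unb hξ α hα
  exact ⟨β, hβ, hαβ⟩

theorem C_ne {ξ : Ordinal} (hξ : ξ < κ.ord) : (p ξ).C.Nonempty := by
  obtain ⟨β, hβ⟩ := H.C_Ioi_ne (α := 0) hξ H.lam_pos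
  exact ⟨β, hβ.1⟩

theorem C_mono {ξ ζ : Ordinal} (hξζ : ξ ≤ ζ) (hζ : ζ < κ.ord) : (p ζ).C ⊆ (p ξ).C := by
  rcases eq_or_lt_of_le hξζ with rfl | h
  · exact subset_rfl
  · exact (H.hmono ξ ζ h hζ).1

end Hyp

theorem exists_otp_elt {κ : Cardinal.{0}} (hκ : κ.IsInaccessible) {C : Set Ordinal}
    (hsub : C ⊆ Set.Iio κ.ord) (hunb : ∀ α < κ.ord, ∃ β ∈ C, α < β) {ζ : Ordinal}
    (hζ : ζ < κ.ord) : ∃ δ ∈ C, otp (C ∩ Set.Iio δ) = Ordinal.lift.{1} ζ ∧ ζ ≤ δ := by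
  set T : Set Ordinal := C ∪ Set.Ici κ.ord with hT
  have hbdd : ¬ BddAbove T := by
    rw [not_bddAbove_iff]
    intro a
    exact ⟨max (a + 1) κ.ord, Or.inr (Set.mem_Ici.2 (le_max_right _ _)),
      lt_of_lt_of_le (lt_add_one a) (le_max_left _ _)⟩
  have hlt : ∀ ξ < κ.ord, enumOrd T ξ < κ.ord := by
    intro ξ hξ
    induction ξ using Ordinal.induction with
    | _ ξ IH =>
    have hcard : ξ.card < (κ.ord).cof := by
      rw [hκ.isRegular.cof_eq]; exact Cardinal.lt_ord.1 hξ
    have hbs : Ordinal.bsup ξ (fun j _ => enumOrd T j) < κ.ord :=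
      Ordinal.bsup_lt_ord hcard (fun j hj => IH j hj (hj.trans hξ))
    obtain ⟨β, hβC, hβ⟩ := hunb _ hbs
    calc enumOrd T ξ ≤ β := enumOrd_le_of_forall_lt (Or.inl hβC)
          (fun j hj => lt_of_le_of_lt (Ordinal.le_bsup _ j hj) hβ)
      _ < κ.ord := hsub hβC
  have hmemC : ∀ ξ < κ.ord, enumOrd T ξ ∈ C := by
    intro ξ hξ
    rcases enumOrd_mem hbdd ξ with h | h
    · exact h
    · exact absurd (hlt ξ hξ) (not_lt.2 h)
  refine ⟨enumOrd T ζ, hmemC ζ hζ, ?_, (enumOrd_strictMono hbdd).le_apply⟩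
  have himg : C ∩ Set.Iio (enumOrd T ζ) = enumOrd T '' Set.Iio ζ := by
    ext x
    constructor
    · rintro ⟨hxC, hx⟩
      have : x ∈ Set.range (enumOrd T) := by rw [range_enumOrd hbdd]; exact Or.inl hxC
      obtain ⟨j, rfl⟩ := this
      exact ⟨j, (enumOrd_strictMono hbdd).lt_iff_lt.1 hx, rfl⟩
    · rintro ⟨j, hj, rfl⟩
      exact ⟨hmemC j (hj.trans hζ), enumOrd_strictMono hbdd hj⟩
  have hIio : otp (Set.Iio ζ) = Ordinal.lift.{1} ζ :=
    (Ordinal.type_subrel ((· < ·) : Ordinal → Ordinal → Prop) ζ).trans (Ordinal.typein_ordinal ζ)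
  rw [himg, ← hIio]
  unfold otp
  refine (Ordinal.type_eq.2 ⟨RelIso.symm ?_⟩)
  refine ⟨Equiv.Set.imageOfInjOn _ _ ((enumOrd_strictMono hbdd).injective.injOn), ?_⟩
  intro a b
  exact (enumOrd_strictMono hbdd).lt_iff_lt

namespace Hyp
variable {κ : Cardinal.{0}} {S : Set Ordinal} {p : Ordinal → Q1S κ.ord S} (H : Hyp κ S p)
include H

theorem stab {η : Ordinal} (hη : η < κ.ord) : ∃ δ ∈ (p η).C, η ≤ δ ∧
    (p (η + 1)).C ∩ Set.Iic δ = (p η).C ∩ Set.Iic δ ∧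
    ∀ α ∈ (p (η + 1)).C ∩ Set.Iio δ, (p (η + 1)).c α = (p η).c α := by
  obtain ⟨δ, hδ, hotp, hle⟩ := exists_otp_elt H.hκ (H.C_sub hη) (H.C_unb hη) hη
  obtain ⟨h1, h2⟩ := H.hc η hη δ hδ hotp
  exact ⟨δ, hδ, hle, h1, h2⟩

theorem nextC_stab {α : Ordinal} (hα : α < κ.ord) : ∀ ζ < κ.ord, α < ζ →
    nextC (p ζ).C α = nextC (p (α + 1)).C α ∧ nextC (p (α + 1)).C α ∈ (p ζ).C := by
  have hα1 : α + 1 < κ.ord := H.succ_lt hα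
  have hβmem := nextC_mem (H.C_Ioi_ne hα1 hα)
  intro ζ
  induction ζ using Ordinal.induction with
  | _ ζ IH =>
  intro hζ hαζ
  rcases Ordinal.zero_or_succ_or_isSuccLimit ζ with rfl | ⟨η, rfl⟩ | hlim
  · exact absurd hαζ not_lt_zero
  · have hη : η < κ.ord := lt_of_lt_of_le (Order.lt_succ η) (le_of_lt hζ)
    rcases (Order.lt_succ_iff.1 hαζ).lt_or_eq with hlt | rfl
    · obtain ⟨e1, e2⟩ := IH η (Order.lt_succ η) hη hlt
      obtain ⟨δ, hδC, hηδ, hCC, -⟩ := H.stab hη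
      have hβδ : nextC (p (α + 1)).C α ≤ δ := e1 ▸ nextC_le hδC (lt_of_lt_of_le hlt hηδ)
      have hmem' : nextC (p (α + 1)).C α ∈ (p (Order.succ η)).C := by
        rw [← Ordinal.add_one_eq_succ]
        exact ((Set.ext_iff.1 hCC _).2 ⟨e2, hβδ⟩).1
      refine ⟨le_antisymm (nextC_le hmem' hβmem.2) ?_, hmem'⟩
      rw [← e1]
      exact nextC_mono (H.C_mono (Order.le_succ η) hζ) (H.C_Ioi_ne hζ hα)
    · rw [← Ordinal.add_one_eq_succ]
      exact ⟨rfl, hβmem.1⟩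
  · have hCeq := (H.hb ζ hζ hlim).2.1
    have hmem' : nextC (p (α + 1)).C α ∈ (p ζ).C := by
      rw [hCeq]
      refine Set.mem_iInter₂.2 fun ξ hξ => ?_
      rcases lt_or_ge α ξ with h | h
      · exact (IH ξ hξ (hξ.trans hζ) h).2
      · exact H.C_mono (h.trans (le_of_lt (lt_add_one α))) hα1 hβmem.1
    refine ⟨le_antisymm (nextC_le hmem' hβmem.2) ?_, hmem'⟩
    have hsub : (p ζ).C ⊆ (p (α + 1)).C := by
      refine H.C_mono ?_ hζ
      rw [Ordinal.add_one_eq_succ]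
      exact hlim.succ_lt hαζ |>.le
    exact nextC_mono hsub (H.C_Ioi_ne hζ hα)

theorem mem_DD_next {α : Ordinal} (hα : α < κ.ord) : nextC (p (α + 1)).C α ∈ DD p := by
  refine mem_DD.2 fun ξ hξ => ?_
  rcases lt_or_ge α ξ with h | h
  · exact (H.nextC_stab hα ξ hξ h).2
  · exact H.C_mono (h.trans (le_of_lt (lt_add_one α))) (H.succ_lt hα)
      (nextC_mem (H.C_Ioi_ne (H.succ_lt hα) hα)).1

theorem DD_unb : ∀ α < κ.ord, ∃ β ∈ DD p, α < β := fun α hα =>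
  ⟨nextC (p (α + 1)).C α, H.mem_DD_next hα,
    (nextC_mem (H.C_Ioi_ne (H.succ_lt hα) hα)).2⟩

theorem DD_sub : DD p ⊆ Set.Iio κ.ord := fun x hx =>
  H.C_sub H.lam_pos (mem_DD.1 hx 0 H.lam_pos)

theorem DD_Ioi_ne {α : Ordinal} (hα : α < κ.ord) : (DD p ∩ Set.Ioi α).Nonempty := by
  obtain ⟨β, hβ, h⟩ := H.DD_unb α hα
  exact ⟨β, hβ, h⟩

theorem DD_ne : (DD p).Nonempty := by
  obtain ⟨β, hβ⟩ := H.DD_Ioi_ne (α := 0) H.lam_pos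
  exact ⟨β, hβ.1⟩

theorem DD_subC {ζ : Ordinal} (hζ : ζ < κ.ord) : DD p ⊆ (p ζ).C := fun x hx =>
  mem_DD.1 hx ζ hζ

theorem nextC_DD {α : Ordinal} (hα : α < κ.ord) :
    nextC (DD p) α = nextC (p (α + 1)).C α :=
  le_antisymm (nextC_le (H.mem_DD_next hα) (nextC_mem (H.C_Ioi_ne (H.succ_lt hα) hα)).2)
    (nextC_mono (H.DD_subC (H.succ_lt hα)) (H.DD_Ioi_ne hα))

theorem nextC_DD_eq {α ζ : Ordinal} (hα : α < κ.ord) (hζ : ζ < κ.ord) (hαζ : α < ζ) :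
    nextC (DD p) α = nextC (p ζ).C α :=
  (H.nextC_DD hα).trans (H.nextC_stab hα ζ hζ hαζ).1.symm

theorem nextC_DD_mem {α : Ordinal} (hα : α < κ.ord) :
    nextC (DD p) α ∈ DD p ∧ α < nextC (DD p) α :=
  nextC_mem (H.DD_Ioi_ne hα)

theorem sInf_stab : ∀ ζ < κ.ord, sInf (p ζ).C = sInf (p 0).C := by
  intro ζ
  induction ζ using Ordinal.induction with
  | _ ζ IH =>
  intro hζ
  rcases Ordinal.zero_or_succ_or_isSuccLimit ζ with rfl | ⟨η, rfl⟩ | hlim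
  · rfl
  · have hη : η < κ.ord := lt_of_lt_of_le (Order.lt_succ η) (le_of_lt hζ)
    obtain ⟨δ, hδC, hηδ, hCC, -⟩ := H.stab hη
    have h1 : sInf (p η).C ∈ (p (Order.succ η)).C := by
      rw [← Ordinal.add_one_eq_succ]
      exact ((Set.ext_iff.1 hCC _).2 ⟨csInf_mem (H.C_ne hη), csInf_le' hδC⟩).1
    refine le_antisymm ?_ ?_
    · rw [← IH η (Order.lt_succ η) hη]
      exact csInf_le' h1
    · rw [← IH η (Order.lt_succ η) hη]
      exact le_csInf ⟨_, h1⟩ fun b hb => csInf_le' (H.C_mono (Order.le_succ η) hζ hb)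
  · have hCeq := (H.hb ζ hζ hlim).2.1
    have h1 : sInf (p 0).C ∈ (p ζ).C := by
      rw [hCeq]
      refine Set.mem_iInter₂.2 fun ξ hξ => ?_
      have := IH ξ hξ (hξ.trans hζ)
      rw [← this]
      exact csInf_mem (H.C_ne (hξ.trans hζ))
    refine le_antisymm (csInf_le' h1) ?_
    exact le_csInf ⟨_, h1⟩ fun b hb => csInf_le' (H.C_mono zero_le hζ hb)

theorem sInf_DD : sInf (DD p) = sInf (p 0).C := by
  have mem0 : sInf (p 0).C ∈ DD p := mem_DD.2 fun ξ hξ => by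
    rw [← H.sInf_stab ξ hξ]; exact csInf_mem (H.C_ne hξ)
  refine le_antisymm (csInf_le' mem0) ?_
  exact le_csInf H.DD_ne fun b hb => csInf_le' (mem_DD.1 hb 0 H.lam_pos)

theorem sInf_DD_eq {ζ : Ordinal} (hζ : ζ < κ.ord) : sInf (DD p) = sInf (p ζ).C :=
  H.sInf_DD.trans (H.sInf_stab ζ hζ).symm

theorem DD_closed : ∀ ξ < κ.ord, (DD p ∩ Set.Iio ξ).Nonempty →
    ξ = sSup (DD p ∩ Set.Iio ξ) → ξ ∈ DD p := by
  intro ξ hξ hne hsup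
  refine mem_DD.2 fun ζ hζ => ?_
  have hne' : ((p ζ).C ∩ Set.Iio ξ).Nonempty := by
    obtain ⟨x, hx⟩ := hne
    exact ⟨x, H.DD_subC hζ hx.1, hx.2⟩
  refine (p ζ).seq.1.2 ξ hξ hne' ?_
  refine le_antisymm ?_ (csSup_le hne' fun x hx => hx.2.le)
  calc ξ = sSup (DD p ∩ Set.Iio ξ) := hsup
    _ ≤ sSup ((p ζ).C ∩ Set.Iio ξ) := csSup_le_csSup ⟨ξ, fun x hx => hx.2.le⟩ hne
        fun x hx => ⟨H.DD_subC hζ hx.1, hx.2⟩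

theorem DD_club : IsClubIn κ.ord (DD p) :=
  ⟨⟨H.DD_sub, H.DD_unb⟩, H.DD_closed⟩

end Hyp

theorem natLimitC_eq_union {γ δ : Ordinal} {u : Set Ordinal}
    (hδ : δ ∈ ⋂ ξ ∈ Set.Iio γ, (p ξ).C) (hu : u ⊆ Set.Iio δ)
    (hpos : ∀ ξ < γ, u ∈ posPlusS S (p ξ).C (p ξ).c (p ξ).w δ) :
    natLimitC κ.ord S γ p δ u = ⋃ ξ ∈ Set.Iio γ, (p ξ).c δ u := by
  unfold natLimitC
  rw [if_pos hδ, if_pos hu, if_pos hpos]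

theorem natLimitC_eq_else {γ δ : Ordinal} {u : Set Ordinal}
    (hδ : δ ∈ ⋂ ξ ∈ Set.Iio γ, (p ξ).C) (hu : u ⊆ Set.Iio δ)
    (hpos : ¬ ∀ ξ < γ, u ∈ posPlusS S (p ξ).C (p ξ).c (p ξ).w δ) :
    natLimitC κ.ord S γ p δ u = u ∪ {δ} := by
  unfold natLimitC
  rw [if_pos hδ, if_pos hu, if_neg hpos]

namespace Hyp
variable (H : Hyp κ S p)
include H

theorem c_mono {α : Ordinal} (hα : α ∈ DD p) {u : Set Ordinal} (hu : u ⊆ Set.Iio α)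
    (hpos : ∀ ζ < κ.ord, u ∈ posPlusS S (p ζ).C (p ζ).c (p ζ).w α) :
    ∀ ζ' < κ.ord, ∀ ζ < ζ', (p ζ).c α u ⊆ (p ζ').c α u := by
  have hαlam : α < κ.ord := H.DD_sub hα
  intro ζ'
  induction ζ' using Ordinal.induction with
  | _ ζ' IH =>
  intro hζ' ζ hζ
  rcases Ordinal.zero_or_succ_or_isSuccLimit ζ' with rfl | ⟨η, rfl⟩ | hlim
  · exact absurd hζ not_lt_zero
  · have hη : η < κ.ord := lt_of_lt_of_le (Order.lt_succ η) hζ'.le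
    have hη1 : η + 1 < κ.ord := H.succ_lt hη
    have step : (p η).c α u ⊆ (p (Order.succ η)).c α u := by
      rw [← Ordinal.add_one_eq_succ]
      have hQ := (H.hmono η (η + 1) (lt_add_one η) hη1).2.2 α
        (mem_DD.1 hα _ hη1) (H.C_Ioi_ne hη1 hαlam) u (hpos (η + 1) hη1)
      set v := (p (η + 1)).c α u with hv
      have hext := (p (η + 1)).seq.2.1.2 α (mem_DD.1 hα _ hη1) u hu
      have hαv : α ∈ v := (p (η + 1)).seq.2.2.1 α (mem_DD.1 hα _ hη1) u hu
      have hnle : nextC (p η).C α ≤ nextC (p (η + 1)).C α :=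
        nextC_mono (H.C_mono (le_of_lt (lt_add_one η)) hη1) (H.C_Ioi_ne hη1 hαlam)
      have h3 := hQ.1.1.2.2.1 α (mem_DD.1 hα _ hη) hu (H.C_Ioi_ne hη hαlam) hnle
      rw [hext.2.2] at h3
      rcases h3 with h3 | h3
      · rw [h3]; exact Set.inter_subset_left
      · exfalso
        have hmem : α ∈ u := by
          rw [h3]
          exact ⟨hαv, (nextC_mem (H.C_Ioi_ne hη hαlam)).2⟩
        exact absurd (hu hmem) (lt_irrefl α)
    rcases (Order.lt_succ_iff.1 hζ).lt_or_eq with h | rfl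
    · exact (IH η (Order.lt_succ η) hη ζ h).trans step
    · exact step
  · have hceq := (H.hb ζ' hζ' hlim).2.2
    have heq : (p ζ').c α u = ⋃ ξ ∈ Set.Iio ζ', (p ξ).c α u := by
      rw [hceq]
      exact natLimitC_eq_union
        (Set.mem_iInter₂.2 fun ξ hξ => mem_DD.1 hα ξ (hξ.trans hζ')) hu
        (fun ξ hξ => hpos ξ (hξ.trans hζ'))
    rw [heq]
    exact Set.subset_biUnion_of_mem (u := fun ξ => (p ξ).c α u) (show ζ ∈ Set.Iio ζ' from hζ)

theorem c_const {α : Ordinal} (hα : α ∈ DD p) {u : Set Ordinal} (hu : u ⊆ Set.Iio α)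
    (hpos : ∀ ζ < κ.ord, u ∈ posPlusS S (p ζ).C (p ζ).c (p ζ).w α) :
    ∀ ζ < κ.ord, α < ζ → (p ζ).c α u = (p (α + 1)).c α u := by
  have hαlam : α < κ.ord := H.DD_sub hα
  have hα1 : α + 1 < κ.ord := H.succ_lt hαlam
  intro ζ
  induction ζ using Ordinal.induction with
  | _ ζ IH =>
  intro hζ hαζ
  rcases Ordinal.zero_or_succ_or_isSuccLimit ζ with rfl | ⟨η, rfl⟩ | hlim
  · exact absurd hαζ not_lt_zero
  · have hη : η < κ.ord := lt_of_lt_of_le (Order.lt_succ η) hζ.le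
    rcases (Order.lt_succ_iff.1 hαζ).lt_or_eq with hlt | rfl
    · obtain ⟨δ, hδC, hηδ, -, hcc⟩ := H.stab hη
      have hmemsucc : α ∈ (p (η + 1)).C ∩ Set.Iio δ :=
        ⟨by rw [Ordinal.add_one_eq_succ]; exact mem_DD.1 hα _ hζ, lt_of_lt_of_le hlt hηδ⟩
      have : (p (Order.succ η)).c α u = (p η).c α u := by
        rw [← Ordinal.add_one_eq_succ]
        rw [hcc α hmemsucc]
      rw [this]
      exact IH η (Order.lt_succ η) hη hlt
    · rw [← Ordinal.add_one_eq_succ]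
  · have hceq := (H.hb ζ hζ hlim).2.2
    have heq : (p ζ).c α u = ⋃ ξ ∈ Set.Iio ζ, (p ξ).c α u := by
      rw [hceq]
      exact natLimitC_eq_union
        (Set.mem_iInter₂.2 fun ξ hξ => mem_DD.1 hα ξ (hξ.trans hζ)) hu
        (fun ξ hξ => hpos ξ (hξ.trans hζ))
    rw [heq]
    have hα1ζ : α + 1 < ζ := by
      rw [Ordinal.add_one_eq_succ]; exact hlim.succ_lt hαζ
    refine subset_antisymm ?_ (Set.subset_biUnion_of_mem (u := fun ξ => (p ξ).c α u) (show α + 1 ∈ Set.Iio ζ from hα1ζ))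
    refine Set.iUnion₂_subset fun ξ hξ => ?_
    rcases lt_trichotomy ξ (α + 1) with h | rfl | h
    · exact H.c_mono hα hu hpos (α + 1) hα1 ξ h
    · exact subset_rfl
    · rw [IH ξ hξ (hξ.trans hζ) (lt_of_le_of_lt (le_of_lt (lt_add_one α)) h)]

theorem qc_eq_base {α : Ordinal} (hα : α ∈ DD p) {u : Set Ordinal} (hu : u ⊆ Set.Iio α)
    (hpos : ∀ ζ < κ.ord, u ∈ posPlusS S (p ζ).C (p ζ).c (p ζ).w α) :
    natLimitC κ.ord S κ.ord p α u = (p (α + 1)).c α u := by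
  have hαlam : α < κ.ord := H.DD_sub hα
  have hα1 : α + 1 < κ.ord := H.succ_lt hαlam
  rw [natLimitC_eq_union hα hu hpos]
  refine subset_antisymm ?_ (Set.subset_biUnion_of_mem (u := fun ξ => (p ξ).c α u) (show α + 1 ∈ Set.Iio κ.ord from hα1))
  refine Set.iUnion₂_subset fun ξ hξ => ?_
  rcases lt_trichotomy ξ (α + 1) with h | rfl | h
  · exact H.c_mono hα hu hpos (α + 1) hα1 ξ h
  · exact subset_rfl
  · rw [H.c_const hα hu hpos ξ hξ (lt_of_le_of_lt (le_of_lt (lt_add_one α)) h)]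

theorem qc_eq {α : Ordinal} (hα : α ∈ DD p) {u : Set Ordinal} (hu : u ⊆ Set.Iio α)
    (hpos : ∀ ζ < κ.ord, u ∈ posPlusS S (p ζ).C (p ζ).c (p ζ).w α)
    {ζ : Ordinal} (hζ : ζ < κ.ord) (hαζ : α < ζ) :
    natLimitC κ.ord S κ.ord p α u = (p ζ).c α u :=
  (H.qc_eq_base hα hu hpos).trans (H.c_const hα hu hpos ζ hζ hαζ).symm

end Hyp

theorem sclosed_restrict {S u : Set Ordinal} {α₀ β₀ : Ordinal} (hcl : SClosed S (u ∪ {α₀}))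
    (hu : u ⊆ Set.Iio α₀) (hβ : β₀ ≤ α₀) : SClosed S ((u ∩ Set.Iio β₀) ∪ {β₀}) := by
  intro ξ hne hsup hξS
  rcases lt_trichotomy ξ β₀ with hlt | rfl | hgt
  · have hseteq : ((u ∩ Set.Iio β₀) ∪ {β₀}) ∩ Set.Iio ξ = u ∩ Set.Iio ξ := by
      ext x
      simp only [Set.mem_inter_iff, Set.mem_union, Set.mem_singleton_iff, Set.mem_Iio]
      constructor
      · rintro ⟨h | rfl, hx⟩
        · exact ⟨h.1, hx⟩
        · exact absurd (hx.trans hlt) (lt_irrefl _)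
      · rintro ⟨hxu, hx⟩
        exact ⟨Or.inl ⟨hxu, hx.trans hlt⟩, hx⟩
    have hseteq2 : (u ∪ {α₀}) ∩ Set.Iio ξ = u ∩ Set.Iio ξ := by
      ext x
      simp only [Set.mem_inter_iff, Set.mem_union, Set.mem_singleton_iff, Set.mem_Iio]
      constructor
      · rintro ⟨h | rfl, hx⟩
        · exact ⟨h, hx⟩
        · exact absurd (hx.trans (hlt.trans_le hβ)) (lt_irrefl _)
      · rintro ⟨hxu, hx⟩
        exact ⟨Or.inl hxu, hx⟩
    rw [hseteq] at hne hsup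
    have hmem := hcl ξ (by rw [hseteq2]; exact hne) (by rw [hseteq2]; exact hsup) hξS
    rcases (Set.mem_union _ _ _).1 hmem with h | h
    · exact Set.mem_union_left _ ⟨h, hlt⟩
    · rw [Set.mem_singleton_iff] at h
      subst h
      exact absurd (hlt.trans_le hβ) (lt_irrefl _)
  · exact Set.mem_union_right _ rfl
  · exfalso
    have hle : sSup (((u ∩ Set.Iio β₀) ∪ {β₀}) ∩ Set.Iio ξ) ≤ β₀ := by
      refine csSup_le hne ?_
      rintro x ⟨h | rfl, -⟩
      · exact h.2.le
      · exact le_rfl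
    exact absurd hgt (not_lt.2 (hsup.le.trans hle))

theorem posPlus_restrict {C : Set Ordinal} {c : Ordinal → Set Ordinal → Set Ordinal}
    {w u : Set Ordinal} {α₀ β₀ : Ordinal}
    (h : u ∈ posPlus C c w α₀) (hfa : firstAbove C w ≤ β₀) (hβ : β₀ ≤ α₀) :
    u ∩ Set.Iio β₀ ∈ posPlus C c w β₀ := by
  obtain ⟨h1, h2, h3, h4⟩ := h
  refine ⟨Set.inter_subset_right, ?_, ?_, ?_⟩
  · rw [inter_Iio_trans hfa]
    exact h2
  · intro γ₀ hγ₀ hwγ hne hle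
    have hγlt : γ₀ < nextC C γ₀ := (nextC_mem hne).2
    rw [inter_Iio_trans (le_of_lt (hγlt.trans_le hle)), inter_Iio_trans hle]
    exact h3 γ₀ hγ₀ hwγ hne (hle.trans hβ)
  · intro γ₀ hsw hγC hne hsup hne2 hle
    have hγlt : γ₀ < nextC C γ₀ := (nextC_mem hne2).2
    rw [inter_Iio_trans (le_of_lt (hγlt.trans_le hle)), inter_Iio_trans hle]
    exact h4 γ₀ hsw hγC hne hsup hne2 (hle.trans hβ)

namespace Hyp
variable (H : Hyp κ S p)
include H

theorem gap {β₀ : Ordinal} (hβ : β₀ < κ.ord) (hβD : β₀ ∉ DD p)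
    (hsd : sInf (DD p) ≤ β₀) :
    ∃ δ ∈ DD p, δ < β₀ ∧ β₀ < nextC (DD p) δ := by
  have hsd' : sInf (DD p) < β₀ := lt_of_le_of_ne hsd (fun h => hβD (h ▸ csInf_mem H.DD_ne))
  have hne : (DD p ∩ Set.Iio β₀).Nonempty := ⟨sInf (DD p), csInf_mem H.DD_ne, hsd'⟩
  set δ := sSup (DD p ∩ Set.Iio β₀) with hδ
  have hδle : δ ≤ β₀ := csSup_le hne fun x hx => hx.2.le
  have hbdd : BddAbove (DD p ∩ Set.Iio β₀) := ⟨β₀, fun y hy => hy.2.le⟩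
  have hδD : δ ∈ DD p := by
    by_cases hmem : δ ∈ DD p
    · exact hmem
    · have heq : DD p ∩ Set.Iio δ = DD p ∩ Set.Iio β₀ := by
        ext x
        constructor
        · rintro ⟨hx1, hx2⟩
          exact ⟨hx1, hx2.trans_le hδle⟩
        · rintro ⟨hx1, hx2⟩
          refine ⟨hx1, lt_of_le_of_ne (le_csSup hbdd ⟨hx1, hx2⟩) ?_⟩
          rintro rfl
          exact hmem hx1
      exact H.DD_closed δ (hδle.trans_lt hβ) (by rw [heq]; exact hne) (by rw [heq])
  have hδβ : δ < β₀ := lt_of_le_of_ne hδle (fun h => hβD (h ▸ hδD))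
  refine ⟨δ, hδD, hδβ, ?_⟩
  by_contra hcon
  push_neg at hcon
  have hmem := nextC_mem (H.DD_Ioi_ne (hδβ.trans hβ))
  have hlt1 : nextC (DD p) δ < β₀ := lt_of_le_of_ne hcon (fun h => hβD (h ▸ hmem.1))
  have hle2 : nextC (DD p) δ ≤ δ := le_csSup ⟨β₀, fun y hy => hy.2.le⟩ ⟨hmem.1, hlt1⟩
  exact absurd hmem.2 (not_lt.2 hle2)

theorem pos_transfer : ∀ α₀, α₀ ∈ DD p → ∀ u,
    u ∈ posPlusS S (DD p) (natLimitC κ.ord S κ.ord p) (p 0).w α₀ →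
    ∀ ζ < κ.ord, u ∈ posPlusS S (p ζ).C (p ζ).c (p ζ).w α₀ := by
  intro α₀
  induction α₀ using Ordinal.induction with
  | _ α₀ IH =>
  intro hα₀ u hu ζ hζ
  have hαlam : α₀ < κ.ord := H.DD_sub hα₀
  obtain ⟨⟨h1, h2, h3, h4⟩, hcl⟩ := hu
  have hw0 : (p 0).w ⊆ Set.Iio (sInf (DD p)) := by rw [H.sInf_DD]; exact (p 0).w_sub
  have hfaD : firstAbove (DD p) (p 0).w = sInf (DD p) := by
    rw [H.sInf_DD] at hw0 ⊢
    rw [firstAbove_eq H.DD_ne (by rw [H.sInf_DD]; exact hw0), H.sInf_DD]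
  have hfaC : firstAbove (p ζ).C (p 0).w = sInf (DD p) := by
    rw [H.sInf_DD_eq hζ]
    exact firstAbove_eq (H.C_ne hζ) (by rw [← H.sInf_DD_eq hζ]; exact hw0)
  -- main auxiliary step
  have step : ∀ δ, δ ∈ DD p → nextC (DD p) δ ≤ α₀ →
      natLimitC κ.ord S κ.ord p δ (u ∩ Set.Iio δ) = u ∩ Set.Iio (nextC (DD p) δ) →
      (u ∩ Set.Iio (nextC (DD p) δ)) ∈
        posS S (p ζ).C (p ζ).c (u ∩ Set.Iio δ) (nextC (DD p) δ) := by
    intro δ hδD hδ'le hfirst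
    have hδlam : δ < κ.ord := H.DD_sub hδD
    have hδα : δ < α₀ := lt_of_lt_of_le (H.nextC_DD_mem hδlam).2 hδ'le
    have hfaδ : firstAbove (DD p) (p 0).w ≤ δ := by rw [hfaD]; exact csInf_le' hδD
    have hrestr : u ∩ Set.Iio δ ∈
        posPlusS S (DD p) (natLimitC κ.ord S κ.ord p) (p 0).w δ :=
      ⟨posPlus_restrict ⟨h1, h2, h3, h4⟩ hfaδ hδα.le, sclosed_restrict hcl h1 hδα.le⟩
    have hposs := IH δ hδα hδD _ hrestr
    have hηlam : max (ζ + 1) (δ + 1) < κ.ord := max_lt (H.succ_lt hζ) (H.succ_lt hδlam)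
    have hζη : ζ < max (ζ + 1) (δ + 1) := lt_of_lt_of_le (lt_add_one ζ) (le_max_left _ _)
    have hδη : δ < max (ζ + 1) (δ + 1) := lt_of_lt_of_le (lt_add_one δ) (le_max_right _ _)
    have hQ := (H.hmono ζ _ hζη hηlam).2.2 δ (mem_DD.1 hδD _ hηlam)
      (H.C_Ioi_ne hηlam hδlam) (u ∩ Set.Iio δ) (hposs _ hηlam)
    have hkey : (p (max (ζ + 1) (δ + 1))).c δ (u ∩ Set.Iio δ) =
        u ∩ Set.Iio (nextC (DD p) δ) := by
      rw [← H.qc_eq hδD Set.inter_subset_right hposs hηlam hδη]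
      exact hfirst
    have hnext : nextC (p (max (ζ + 1) (δ + 1))).C δ = nextC (DD p) δ :=
      (H.nextC_DD_eq hδlam hηlam hδη).symm
    rw [hkey, hnext] at hQ
    exact hQ
  rw [H.ha ζ hζ]
  refine ⟨⟨h1, ?_, ?_, ?_⟩, hcl⟩
  · rw [hfaC, ← hfaD]
    exact h2
  · -- third clause
    intro β₀ hβC hwβ hneζ hleζ
    have hνβ : β₀ < nextC (p ζ).C β₀ := (nextC_mem hneζ).2
    have hβlam : β₀ < κ.ord := lt_of_lt_of_le hνβ (hleζ.trans hαlam.le)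
    by_cases hβD : β₀ ∈ DD p
    · have hβα : β₀ < α₀ := hνβ.trans_le hleζ
      have hδ'le : nextC (DD p) β₀ ≤ α₀ := nextC_le hα₀ hβα
      have hνδ' : nextC (p ζ).C β₀ ≤ nextC (DD p) β₀ :=
        nextC_le (H.DD_subC hζ (H.nextC_DD_mem hβlam).1) (H.nextC_DD_mem hβlam).2
      rcases h3 β₀ hβD hwβ (H.DD_Ioi_ne hβlam) hδ'le with hfirst | hsecond
      · have hstep := step β₀ hβD hδ'le hfirst
        have h3v := hstep.1.1.2.2.1 β₀ hβC Set.inter_subset_right hneζ hνδ'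
        rw [inter_Iio_trans (le_of_lt (H.nextC_DD_mem hβlam).2),
          inter_Iio_trans hνδ'] at h3v
        exact h3v
      · right
        exact inter_Iio_squeeze le_rfl hνβ.le hνδ' hsecond
    · obtain ⟨δ, hδD, hδβ, hβδ'⟩ := H.gap hβlam hβD
        (by rw [H.sInf_DD_eq hζ]; exact csInf_le' hβC)
      have hδlam : δ < κ.ord := hδβ.trans hβlam
      have hδ'le : nextC (DD p) δ ≤ α₀ := nextC_le hα₀ (hδβ.trans (hνβ.trans_le hleζ))
      have hwδ : (p 0).w ⊆ Set.Iio δ := fun x hx => lt_of_lt_of_le (hw0 hx) (csInf_le' hδD)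
      have hνδ' : nextC (p ζ).C β₀ ≤ nextC (DD p) δ :=
        nextC_le (H.DD_subC hζ (H.nextC_DD_mem hδlam).1) hβδ'
      rcases h3 δ hδD hwδ (H.DD_Ioi_ne hδlam) hδ'le with hfirst | hsecond
      · have hstep := step δ hδD hδ'le hfirst
        have h3v := hstep.1.1.2.2.1 β₀ hβC (fun x hx => hx.2.trans hδβ) hneζ hνδ'
        rw [inter_Iio_trans hβδ'.le, inter_Iio_trans hνδ'] at h3v
        exact h3v
      · right
        exact inter_Iio_squeeze hδβ.le hνβ.le hνδ' hsecond
  · -- fourth clause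
    intro β₀ hsw hβC hne1 hsup hne2 hleζ
    have hνβ : β₀ < nextC (p ζ).C β₀ := (nextC_mem hne2).2
    have hβlam : β₀ < κ.ord := lt_of_lt_of_le hνβ (hleζ.trans hαlam.le)
    have hβD : β₀ ∉ DD p := fun h => hβC (H.DD_subC hζ h)
    have hne1' := hne1
    obtain ⟨x, hx⟩ := hne1'
    have hsdβ : sInf (DD p) ≤ β₀ :=
      le_of_lt (lt_of_le_of_lt (by rw [H.sInf_DD_eq hζ]; exact csInf_le' hx.1) hx.2)
    obtain ⟨δ, hδD, hδβ, hβδ'⟩ := H.gap hβlam hβD hsdβ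
    have hδlam : δ < κ.ord := hδβ.trans hβlam
    have hδ'le : nextC (DD p) δ ≤ α₀ := nextC_le hα₀ (hδβ.trans (hνβ.trans_le hleζ))
    have hwδ : (p 0).w ⊆ Set.Iio δ := fun y hy => lt_of_lt_of_le (hw0 hy) (csInf_le' hδD)
    have hνδ' : nextC (p ζ).C β₀ ≤ nextC (DD p) δ :=
      nextC_le (H.DD_subC hζ (H.nextC_DD_mem hδlam).1) hβδ'
    rcases h3 δ hδD hwδ (H.DD_Ioi_ne hδlam) hδ'le with hfirst | hsecond
    · have hstep := step δ hδD hδ'le hfirst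
      have hssup : sSup (u ∩ Set.Iio δ) < β₀ :=
        lt_of_le_of_lt (csSup_le' (fun y hy => hy.2.le)) hδβ
      have h4v := hstep.1.1.2.2.2 β₀ hssup hβC hne1 hsup hne2 hνδ'
      rw [inter_Iio_trans hβδ'.le, inter_Iio_trans hνδ'] at h4v
      exact h4v
    · exact (inter_Iio_squeeze hδβ.le hνβ.le hνδ' hsecond).symm

end Hyp

namespace Hyp
variable (H : Hyp κ S p)
include H

theorem qc_seq : SClosedSeq κ.ord S (DD p) (natLimitC κ.ord S κ.ord p) := by
  refine ⟨H.DD_club, ⟨⟨H.DD_sub, H.DD_unb⟩, ?_⟩, ?_, ?_⟩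
  · -- ExtFun
    intro δ hδ u hu
    have hδlam : δ < κ.ord := H.DD_sub hδ
    have hnem := H.nextC_DD_mem hδlam
    by_cases hpos : ∀ ξ < κ.ord, u ∈ posPlusS S (p ξ).C (p ξ).c (p ξ).w δ
    · rw [natLimitC_eq_union hδ hu hpos]
      refine ⟨?_, ?_, ?_⟩
      · refine Set.iUnion₂_subset fun ξ hξ => ?_
        have hext := (p ξ).seq.2.1.2 δ (mem_DD.1 hδ ξ hξ) u hu
        refine hext.1.trans (Set.Iio_subset_Iio ?_)
        exact nextC_le (mem_DD.1 hnem.1 ξ hξ) hnem.2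
      · intro hcon
        have hext0 := (p 0).seq.2.1.2 δ (mem_DD.1 hδ 0 H.lam_pos) u hu
        refine hext0.2.1 fun x hx => ?_
        exact hcon (Set.mem_biUnion (show (0 : Ordinal) ∈ Set.Iio κ.ord from H.lam_pos) hx)
      · ext x
        constructor
        · rintro ⟨hx1, hx2⟩
          obtain ⟨ξ, hξ, hxs⟩ := Set.mem_iUnion₂.1 hx1
          have hext := (p ξ).seq.2.1.2 δ (mem_DD.1 hδ ξ hξ) u hu
          have hmem : x ∈ (p ξ).c δ u ∩ Set.Iio δ := ⟨hxs, hx2⟩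
          rw [hext.2.2] at hmem
          exact hmem
        · intro hx
          have hext0 := (p 0).seq.2.1.2 δ (mem_DD.1 hδ 0 H.lam_pos) u hu
          have hmem : x ∈ (p 0).c δ u ∩ Set.Iio δ := by rw [hext0.2.2]; exact hx
          exact ⟨Set.mem_iUnion₂.2 ⟨0, H.lam_pos, hmem.1⟩, hmem.2⟩
    · rw [natLimitC_eq_else hδ hu hpos]
      refine ⟨?_, ?_, ?_⟩
      · rintro x (hx | rfl)
        · exact (hu hx).trans hnem.2
        · exact hnem.2
      · intro hcon
        exact absurd (hcon (Set.mem_union_right _ rfl)) (lt_irrefl δ)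
      · ext x
        constructor
        · rintro ⟨hx | rfl, hxδ⟩
          · exact hx
          · exact absurd (Set.mem_Iio.1 hxδ) (lt_irrefl _)
        · intro hx
          exact ⟨Set.mem_union_left _ hx, hu hx⟩
  · -- δ ∈ c δ u
    intro δ hδ u hu
    by_cases hpos : ∀ ξ < κ.ord, u ∈ posPlusS S (p ξ).C (p ξ).c (p ξ).w δ
    · rw [natLimitC_eq_union hδ hu hpos]
      exact Set.mem_iUnion₂.2 ⟨0, H.lam_pos, (p 0).seq.2.2.1 δ (mem_DD.1 hδ 0 H.lam_pos) u hu⟩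
    · rw [natLimitC_eq_else hδ hu hpos]
      exact Set.mem_union_right _ rfl
  · -- S-closure
    intro x hxS hxD α hα u hu hsup
    have hαD := hα.1
    have hαx := hα.2
    have hαlam : α < κ.ord := H.DD_sub hαD
    by_cases hpos : ∀ ξ < κ.ord, u ∈ posPlusS S (p ξ).C (p ξ).c (p ξ).w α
    · obtain ⟨ζ₁, hζ₁, hxC⟩ : ∃ ζ₁, ζ₁ < κ.ord ∧ x ∉ (p ζ₁).C := by
        by_contra hcon
        push_neg at hcon
        exact hxD (mem_DD.2 hcon)
      have hζlam : max ζ₁ (α + 1) < κ.ord := max_lt hζ₁ (H.succ_lt hαlam)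
      have hαζ : α < max ζ₁ (α + 1) := lt_of_lt_of_le (lt_add_one α) (le_max_right _ _)
      have hxCζ : x ∉ (p (max ζ₁ (α + 1))).C := fun h =>
        hxC (H.C_mono (le_max_left _ _) hζlam h)
      have hqc := H.qc_eq hαD hu hpos hζlam hαζ
      rw [hqc] at hsup ⊢
      exact (p _).seq.2.2.2 x hxS hxCζ α ⟨mem_DD.1 hαD _ hζlam, hαx⟩ u hu hsup
    · rw [natLimitC_eq_else hαD hu hpos] at hsup ⊢
      exfalso
      have hle : sSup ((u ∪ {α}) ∩ Set.Iio x) ≤ α := by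
        refine csSup_le ⟨α, Set.mem_union_right _ rfl, hαx⟩ ?_
        rintro y ⟨hy | rfl, -⟩
        · exact (hu hy).le
        · exact le_rfl
      exact absurd (hsup.le.trans hle) (not_le.2 hαx)

end Hyp

end Q1SFusion

/-- a `λ`-sequence of conditions satisfying the fusion requirements
(a)–(c) has an upper bound in `Q¹_S`. -/
theorem Q1S_fusion (κ : Cardinal.{0}) (hκ : κ.IsInaccessible) (S : Set Ordinal)
    (hS : StatIn κ.ord S) (hS' : StatIn κ.ord (Set.Iio κ.ord \ S))
    (p : Ordinal → Q1S κ.ord S)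
    (hmono : ∀ ξ ζ, ξ < ζ → ζ < κ.ord → Q1Sle κ.ord S (p ξ) (p ζ))
    (ha : ∀ ξ < κ.ord, (p ξ).w = (p 0).w)
    (hb : ∀ γ < κ.ord, Order.IsSuccLimit γ →
      (p γ).w = (⋃ ξ ∈ Set.Iio γ, (p ξ).w) ∧
      (p γ).C = (⋂ ξ ∈ Set.Iio γ, (p ξ).C) ∧
      (p γ).c = natLimitC κ.ord S γ p)
    (hc : ∀ ξ < κ.ord, ∀ δ ∈ (p ξ).C,
      otp ((p ξ).C ∩ Set.Iio δ) = Ordinal.lift.{1} ξ →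
      (p (ξ + 1)).C ∩ Set.Iic δ = (p ξ).C ∩ Set.Iic δ ∧
      ∀ α ∈ (p (ξ + 1)).C ∩ Set.Iio δ, (p (ξ + 1)).c α = (p ξ).c α) :
    ∃ q : Q1S κ.ord S, ∀ ξ < κ.ord, Q1Sle κ.ord S (p ξ) q := by
  have H : Q1SFusion.Hyp κ S p := ⟨hκ, hmono, ha, hb, hc⟩
  refine ⟨⟨(p 0).w, Q1SFusion.DD p, natLimitC κ.ord S κ.ord p, H.qc_seq, ?_, ?_, ?_⟩, ?_⟩
  · rw [H.sInf_DD]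
    exact (p 0).w_sub
  · rw [H.sInf_DD]
    exact (p 0).w_cl
  · intro α u hor
    rcases hor with h | h
    · unfold natLimitC
      rw [if_neg (show ¬ α ∈ ⋂ ξ ∈ Set.Iio κ.ord, (p ξ).C from h)]
    · by_cases hα : α ∈ Q1SFusion.DD p
      · unfold natLimitC
        rw [if_pos (show α ∈ ⋂ ξ ∈ Set.Iio κ.ord, (p ξ).C from hα), if_neg h]
      · unfold natLimitC
        rw [if_neg (show ¬ α ∈ ⋂ ξ ∈ Set.Iio κ.ord, (p ξ).C from hα)]
  · intro ξ hξ
    refine ⟨H.DD_subC hξ, ?_, ?_⟩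
    · -- clause 2
      show (p 0).w ∈ posPlusS S (p ξ).C (p ξ).c (p ξ).w (sInf (Q1SFusion.DD p))
      rw [H.ha ξ hξ]
      have hw : (p 0).w ⊆ Set.Iio (sInf (p ξ).C) := by
        rw [← H.sInf_DD_eq hξ, H.sInf_DD]
        exact (p 0).w_sub
      have hfa : firstAbove (p ξ).C (p 0).w = sInf (p ξ).C :=
        Q1SFusion.firstAbove_eq (H.C_ne hξ) hw
      refine ⟨⟨?_, ?_, ?_, ?_⟩, ?_⟩
      · rw [H.sInf_DD_eq hξ]
        exact hw
      · rw [hfa]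
        exact Set.inter_eq_left.2 hw
      · intro α₀ hα₀ hwα hne hle
        exfalso
        have h1 : sInf (p ξ).C ≤ α₀ := csInf_le' hα₀
        have h2 : α₀ < nextC (p ξ).C α₀ := (Q1SFusion.nextC_mem hne).2
        rw [H.sInf_DD_eq hξ] at hle
        exact absurd h2 (not_lt.2 (hle.trans h1))
      · intro α₀ hsw hαC hne1 hsup hne2 hle
        exfalso
        obtain ⟨x, hx⟩ := hne1
        have h1 : sInf (p ξ).C ≤ x := csInf_le' hx.1
        have h2 : α₀ < nextC (p ξ).C α₀ := (Q1SFusion.nextC_mem hne2).2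
        rw [H.sInf_DD_eq hξ] at hle
        exact absurd ((lt_of_lt_of_le h2 hle).trans (lt_of_le_of_lt h1 hx.2)) (lt_irrefl α₀)
      · rw [H.sInf_DD]
        exact (p 0).w_cl
    · -- clause 3
      intro α₀ hα₀ hne u hu
      have hαD : α₀ ∈ Q1SFusion.DD p := hα₀
      have hαlam : α₀ < κ.ord := H.DD_sub hαD
      have hu' : u ⊆ Set.Iio α₀ := hu.1.1
      have hposs := H.pos_transfer α₀ hαD u hu
      have hηlam : max (ξ + 1) (α₀ + 1) < κ.ord := max_lt (H.succ_lt hξ) (H.succ_lt hαlam)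
      have hξη : ξ < max (ξ + 1) (α₀ + 1) := lt_of_lt_of_le (lt_add_one ξ) (le_max_left _ _)
      have hαη : α₀ < max (ξ + 1) (α₀ + 1) := lt_of_lt_of_le (lt_add_one α₀) (le_max_right _ _)
      have hQ := (H.hmono ξ _ hξη hηlam).2.2 α₀ (Q1SFusion.mem_DD.1 hαD _ hηlam)
        (H.C_Ioi_ne hηlam hαlam) u (hposs _ hηlam)
      rw [← H.qc_eq hαD hu' hposs hηlam hαη, ← H.nextC_DD_eq hαlam hηlam hαη] at hQ
      exact hQ
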